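/- arXiv:1208.1428 — 3 statements merged into one kernel-verified Lean document; each statement's English description precedes it below -/
import Mathlib

section
/- For every Schwartz function f: ℝ → ℂ and every k ∈ ℝ, the limit lim_{ε→0⁺} ∫_ℝ f(x) e^{ikx} / (x + iε) dx exists and equals −i ∫_k^∞ f̂(k′) dk′, where f̂(k) = ∫_ℝ f(x) e^{ikx} dx. Moreover, lim_{k→−∞} ∫_k^∞ f̂(k′) dk′ = 2π f(0). -/
set_option maxHeartbeats 1000000

open Filter Topology Complex MeasureTheory Set FourierTransform

lemma integral_cexp_mul_Ioi_zero {c : ℂ} (hc : c.re < 0) :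
    ∫ t in Set.Ioi (0:ℝ), Complex.exp (c * t) = -c⁻¹ := by
  have hcne : c ≠ 0 := fun h => by simp [h] at hc
  have hnorm : ∀ t : ℝ, ‖Complex.exp (c * t)‖ = Real.exp (c.re * t) := by
    intro t
    rw [Complex.norm_exp]
    congr 1
    simp [Complex.mul_re]
  have hint : IntegrableOn (fun t : ℝ => Complex.exp (c * t)) (Set.Ioi 0) := by
    have h0 : IntegrableOn (fun t : ℝ => Real.exp (-(-c.re) * t)) (Set.Ioi (0:ℝ)) :=
      exp_neg_integrableOn_Ioi 0 (by linarith)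
    refine Integrable.mono' h0 ?_ ?_
    · exact (Complex.continuous_exp.comp (by fun_prop)).aestronglyMeasurable
    · filter_upwards with t
      rw [hnorm]
      simp
  have hderiv : ∀ t ∈ Set.Ioi (0:ℝ),
      HasDerivAt (fun t : ℝ => Complex.exp (c * t) / c) (Complex.exp (c * t)) t := by
    intro t _
    have h1 : HasDerivAt (fun t : ℝ => c * (t:ℂ)) c t := by
      simpa using (Complex.ofRealCLM.hasDerivAt (x := t)).const_mul c
    simpa [mul_div_assoc, div_self hcne] using (h1.cexp).div_const c
  have hcont : ContinuousWithinAt (fun t : ℝ => Complex.exp (c * t) / c) (Set.Ici 0) 0 := by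
    apply Continuous.continuousWithinAt
    exact (Complex.continuous_exp.comp (by fun_prop)).div_const c
  have htend : Tendsto (fun t : ℝ => Complex.exp (c * t) / c) atTop (𝓝 0) := by
    rw [tendsto_zero_iff_norm_tendsto_zero]
    have heq : (fun t : ℝ => ‖Complex.exp (c*t)/c‖) = fun t => Real.exp (c.re * t) / ‖c‖ := by
      ext t; rw [norm_div, hnorm]
    rw [heq]
    have : Tendsto (fun t : ℝ => c.re * t) atTop atBot :=
      (tendsto_const_mul_atBot_of_neg hc).2 tendsto_id
    simpa using (Real.tendsto_exp_atBot.comp this).div_const ‖c‖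
  have := integral_Ioi_of_hasDerivAt_of_tendsto hcont hderiv hint htend
  rw [this]
  simp [neg_div, hcne]

/-- The boundary value of `(x + iε)⁻¹`: for every Schwartz function `f` and
every `k ∈ ℝ`, `lim_{ε→0⁺} ∫ f(x) e^{ikx}/(x + iε) dx = −i ∫_k^∞ f̂(k′) dk′`
(with `f̂(k) = ∫ f(x) e^{ikx} dx`), and `lim_{k→−∞} ∫_k^∞ f̂(k′) dk′ = 2π f(0)`. -/
theorem boundary_value_of_inv_x_plus_i_eps (f : SchwartzMap ℝ ℂ) :
    (∀ k : ℝ,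
      Tendsto (fun ε : ℝ =>
          ∫ x : ℝ, f x * Complex.exp (Complex.I * k * x) / ((x : ℂ) + ε * Complex.I))
        (nhdsWithin 0 (Set.Ioi 0))
        (nhds (-Complex.I *
          ∫ k' in Set.Ioi k, ∫ x : ℝ, f x * Complex.exp (Complex.I * k' * x)))) ∧
    Tendsto (fun k : ℝ =>
        ∫ k' in Set.Ioi k, ∫ x : ℝ, f x * Complex.exp (Complex.I * k' * x))
      atBot (nhds ((2 * Real.pi : ℝ) * f 0)) := by
  set g : ℝ → ℂ := fun k => ∫ x : ℝ, f x * Complex.exp (Complex.I * k * x) with hg_def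
  have hπ : (2 * Real.pi) ≠ 0 := by positivity
  -- identification with the Mathlib Fourier transform
  have hg_eq : ∀ k : ℝ, g k = 𝓕 (⇑f) (-(2 * Real.pi)⁻¹ * k) := by
    intro k
    rw [Real.fourier_real_eq_integral_exp_smul]
    apply integral_congr_ae
    filter_upwards with x
    rw [smul_eq_mul, mul_comm]
    congr 2
    have hπc : (Real.pi : ℂ) ≠ 0 := by exact_mod_cast Real.pi_ne_zero
    push_cast
    field_simp
  have hFT_int : Integrable (𝓕 (⇑f)) := (SchwartzMap.fourierTransformCLM ℂ f).integrable
  have hg_int : Integrable g := by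
    have := hFT_int.comp_mul_left' (R := -(2 * Real.pi)⁻¹) (by simp [Real.pi_ne_zero])
    exact this.congr (by filter_upwards with k using (hg_eq k).symm)
  have hg_cont : Continuous g := by
    have : Continuous (𝓕 (⇑f)) := (SchwartzMap.fourierTransformCLM ℂ f).continuous
    exact (this.comp (by fun_prop)).congr fun k => (hg_eq k).symm
  -- total integral equals 2π f 0
  have hg_total : ∫ k, g k = ((2 * Real.pi : ℝ) : ℂ) * f 0 := by
    calc ∫ k, g k = ∫ k, 𝓕 (⇑f) (-(2 * Real.pi)⁻¹ * k) := by
          exact integral_congr_ae (Eventually.of_forall hg_eq)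
      _ = |(-(2 * Real.pi)⁻¹)⁻¹| • ∫ w, 𝓕 (⇑f) w :=
          MeasureTheory.Measure.integral_comp_mul_left (𝓕 (⇑f)) _
      _ = ((2 * Real.pi : ℝ) : ℂ) * f 0 := by
          have hinv : ∫ w, 𝓕 (⇑f) w = f 0 := by
            have h := f.continuous.fourierInv_fourier_eq f.integrable hFT_int
            have h0 := congrFun h 0
            rw [Real.fourierInv_eq] at h0
            simpa using h0
          rw [hinv]
          have habs : |(-(2 * Real.pi)⁻¹)⁻¹| = 2 * Real.pi := by
            rw [abs_inv, abs_neg, abs_inv, inv_inv, abs_of_pos Real.two_pi_pos]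
          rw [habs, Complex.real_smul]
  constructor
  · intro k
    -- translation: ∫_{Ioi k} g = ∫_{t ∈ Ioi 0} g (k + t)
    have htrans : ∫ k' in Set.Ioi k, g k' = ∫ t in Set.Ioi (0:ℝ), g (k + t) := by
      rw [← integral_indicator measurableSet_Ioi, ← integral_indicator measurableSet_Ioi]
      rw [← integral_add_left_eq_self (fun t => Set.indicator (Set.Ioi k) g t) k]
      congr 1
      ext t
      by_cases ht : 0 < t
      · rw [Set.indicator_of_mem (by simpa using ht), Set.indicator_of_mem (by simp [ht])]
      · rw [Set.indicator_of_notMem (by simpa using ht),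
          Set.indicator_of_notMem (by simp [ht])]
    have hgk_int : Integrable (fun t => g (k + t)) := hg_int.comp_add_left k
    -- key identity for ε > 0
    have key : ∀ ε : ℝ, 0 < ε →
        (∫ x : ℝ, f x * Complex.exp (Complex.I * k * x) / ((x : ℂ) + ε * Complex.I))
          = -Complex.I * ∫ t in Set.Ioi (0:ℝ), Real.exp (-ε * t) • g (k + t) := by
      intro ε hε
      have hfub : Integrable (Function.uncurry fun (x t : ℝ) =>
          f x * Complex.exp (Complex.I * ((k:ℂ) + t) * x + (-ε * t : ℝ)))
          (volume.prod (volume.restrict (Set.Ioi 0))) := by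
        have hbd : Integrable (fun p : ℝ × ℝ => ‖f p.1‖ * Real.exp (-ε * p.2))
            (volume.prod (volume.restrict (Set.Ioi 0))) :=
          (f.integrable.norm).mul_prod (exp_neg_integrableOn_Ioi 0 hε)
        refine hbd.mono' ?_ ?_
        · apply Continuous.aestronglyMeasurable
          apply Continuous.mul
          · exact f.continuous.comp continuous_fst
          · exact Complex.continuous_exp.comp (by fun_prop)
        · filter_upwards with p
          simp only [Function.uncurry]
          rw [norm_mul]
          gcongr
          rw [Complex.norm_exp]
          apply le_of_eq
          congr 1
          simp [Complex.mul_re, Complex.add_re, Complex.add_im, Complex.mul_im]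
      have hswap := integral_integral_swap (f := fun (x t : ℝ) =>
          f x * Complex.exp (Complex.I * ((k:ℂ) + t) * x + (-ε * t : ℝ))) hfub
      calc (∫ x : ℝ, f x * Complex.exp (Complex.I * k * x) / ((x : ℂ) + ε * Complex.I))
          = ∫ x : ℝ, -Complex.I * ∫ t in Set.Ioi (0:ℝ),
              f x * Complex.exp (Complex.I * ((k:ℂ) + t) * x + (-ε * t : ℝ)) := by
            congr 1
            ext x
            have hin : ∫ t in Set.Ioi (0:ℝ),
                f x * Complex.exp (Complex.I * ((k:ℂ) + t) * x + (-ε * t : ℝ))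
                = (f x * Complex.exp (Complex.I * k * x)) *
                    ∫ t in Set.Ioi (0:ℝ), Complex.exp ((Complex.I * x - ε) * t) := by
              rw [← integral_const_mul]
              apply setIntegral_congr_fun measurableSet_Ioi
              intro t _
              simp only
              conv_rhs => rw [mul_assoc, ← Complex.exp_add]
              congr 2
              push_cast
              ring
            rw [hin, integral_cexp_mul_Ioi_zero (by simpa [Complex.sub_re, Complex.mul_re] using hε)]
            have hne : Complex.I * x - ε ≠ 0 := by
              intro h
              have := congrArg Complex.re h
              simp [Complex.sub_re, Complex.mul_re] at this
              linarith
            have hne2 : (x : ℂ) + ε * Complex.I ≠ 0 := by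
              intro h
              have := congrArg Complex.im h
              simp at this
              linarith
            field_simp
            ring_nf
            have hne3 : Complex.I * ε + x ≠ 0 := by rw [add_comm, mul_comm]; exact hne2
            rw [← sub_mul, mul_inv_eq_iff_eq_mul₀ hne3]
            linear_combination (-(f x) * ε) * Complex.I_sq
        _ = -Complex.I * ∫ x : ℝ, ∫ t in Set.Ioi (0:ℝ),
              f x * Complex.exp (Complex.I * ((k:ℂ) + t) * x + (-ε * t : ℝ)) := by
            rw [integral_const_mul]
        _ = -Complex.I * ∫ t in Set.Ioi (0:ℝ), ∫ x : ℝ,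
              f x * Complex.exp (Complex.I * ((k:ℂ) + t) * x + (-ε * t : ℝ)) := by
            rw [hswap]
        _ = -Complex.I * ∫ t in Set.Ioi (0:ℝ), Real.exp (-ε * t) • g (k + t) := by
            congr 1
            apply setIntegral_congr_fun measurableSet_Ioi
            intro t _
            rw [hg_def]
            simp only
            rw [← integral_smul]
            apply integral_congr_ae
            filter_upwards with x
            rw [Complex.exp_add, Complex.real_smul, Complex.ofReal_exp]
            push_cast
            ring
    -- dominated convergence in ε
    have hDCT : Tendsto (fun ε : ℝ => ∫ t in Set.Ioi (0:ℝ), Real.exp (-ε * t) • g (k + t))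
        (nhdsWithin 0 (Set.Ioi 0)) (nhds (∫ t in Set.Ioi (0:ℝ), g (k + t))) := by
      apply tendsto_integral_filter_of_dominated_convergence (fun t => ‖g (k + t)‖)
      · filter_upwards with ε
        exact (Continuous.aestronglyMeasurable (by fun_prop)).restrict
      · filter_upwards [self_mem_nhdsWithin] with ε (hε : 0 < ε)
        filter_upwards [ae_restrict_mem measurableSet_Ioi] with t (ht : 0 < t)
        rw [norm_smul, Real.norm_eq_abs, abs_of_pos (Real.exp_pos _)]
        nth_rewrite 2 [← one_mul ‖g (k+t)‖]
        gcongr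
        exact Real.exp_le_one_iff.2 (by nlinarith)
      · exact hgk_int.norm.integrableOn
      · filter_upwards with t
        have : Tendsto (fun ε : ℝ => Real.exp (-ε * t)) (nhdsWithin 0 (Set.Ioi 0)) (𝓝 1) := by
          have hc : Continuous (fun ε : ℝ => Real.exp (-ε * t)) := by fun_prop
          have h2 : Tendsto (fun ε : ℝ => Real.exp (-ε * t)) (nhdsWithin 0 (Set.Ioi 0))
              (𝓝 (Real.exp (-0 * t))) := (hc.tendsto 0).mono_left nhdsWithin_le_nhds
          simpa using h2
        have h3 : Tendsto (fun ε : ℝ => Real.exp (-ε * t) • g (k + t))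
            (nhdsWithin 0 (Set.Ioi 0)) (𝓝 ((1:ℝ) • g (k + t))) :=
          this.smul (tendsto_const_nhds (x := g (k + t)))
        simpa using h3
    have hfinal : Tendsto (fun ε : ℝ =>
        ∫ x : ℝ, f x * Complex.exp (Complex.I * k * x) / ((x : ℂ) + ε * Complex.I))
        (nhdsWithin 0 (Set.Ioi 0))
        (𝓝 (-Complex.I * ∫ t in Set.Ioi (0:ℝ), g (k + t))) := by
      apply Tendsto.congr' _ (hDCT.const_mul (-Complex.I))
      filter_upwards [self_mem_nhdsWithin] with ε (hε : 0 < ε)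
      exact (key ε hε).symm
    rw [← htrans] at hfinal
    exact hfinal
  · -- second part
    have : Tendsto (fun k : ℝ => ∫ k' in Set.Ioi k, g k') atBot (𝓝 (∫ k', g k')) := by
      simp_rw [← integral_indicator measurableSet_Ioi]
      apply tendsto_integral_filter_of_dominated_convergence (fun u => ‖g u‖)
      · filter_upwards with k
        exact hg_cont.aestronglyMeasurable.indicator measurableSet_Ioi
      · filter_upwards with k
        filter_upwards with u
        exact norm_indicator_le_norm_self g u
      · exact hg_int.norm
      · filter_upwards with u
        apply Tendsto.congr' _ (tendsto_const_nhds (x := g u))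
        filter_upwards [eventually_lt_atBot u] with k hk
        exact (Set.indicator_of_mem (by simpa using hk) g).symm
    rw [hg_total] at this
    exact this
end

section
/- Fix ℏ > 0. For α, β ∈ ℝ define the operator W(α,β) on L²(ℝ, ℂ) by (W(α,β)Φ)(x) = e^{iℏαβ/2} e^{iβx} Φ(x + ℏα). Then each W(α,β) is a unitary operator, W(0,0) is the identity, the Weyl relations W(α,β)W(α′,β′) = e^{(iℏ/2)(αβ′ − α′β)} W(α+α′, β+β′) hold for all α, β, α′, β′ ∈ ℝ, and the adjoint satisfies W(α,β)* = W(−α,−β). -/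
open MeasureTheory
open MeasureTheory Complex

namespace WeylAux

noncomputable def g (ℏ α β : ℝ) (f : ℝ → ℂ) (x : ℝ) : ℂ :=
  Complex.exp (Complex.I * ℏ * α * β / 2) * Complex.exp (Complex.I * β * x) * f (x + ℏ * α)

lemma norm_g (ℏ α β : ℝ) (f : ℝ → ℂ) (x : ℝ) : ‖g ℏ α β f x‖ = ‖f (x + ℏ * α)‖ := by
  simp [g, Complex.norm_exp, norm_mul]

lemma mp (ℏ α : ℝ) : MeasurePreserving (fun x : ℝ => x + ℏ * α) volume volume :=
  measurePreserving_add_right volume (ℏ * α)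

lemma memℒp_g (ℏ α β : ℝ) {f : ℝ → ℂ} (hf : MemLp f 2 (volume : Measure ℝ)) :
    MemLp (g ℏ α β f) 2 (volume : Measure ℝ) := by
  have h1 : MemLp (fun x : ℝ => f (x + ℏ * α)) 2 volume := hf.comp_measurePreserving (mp ℏ α)
  have h2 : AEStronglyMeasurable (g ℏ α β f) volume := by
    exact (((Complex.continuous_exp.comp (by continuity)).aestronglyMeasurable.const_mul _)).mul h1.1
  refine ⟨h2, ?_⟩
  rw [eLpNorm_congr_norm_ae (ae_of_all _ (norm_g ℏ α β f))]
  exact h1.2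

lemma eLpNorm_g (ℏ α β : ℝ) {f : ℝ → ℂ} (hf : AEStronglyMeasurable f (volume : Measure ℝ)) :
    eLpNorm (g ℏ α β f) 2 volume = eLpNorm f 2 volume := by
  rw [eLpNorm_congr_norm_ae (ae_of_all _ (norm_g ℏ α β f))]
  exact eLpNorm_comp_measurePreserving hf (mp ℏ α)

end WeylAux

namespace WeylAux

lemma g_congr (ℏ α β : ℝ) {f f' : ℝ → ℂ} (h : f =ᵐ[volume] f') :
    g ℏ α β f =ᵐ[volume] g ℏ α β f' := by
  have h2 : (fun x : ℝ => f (x + ℏ * α)) =ᵐ[volume] fun x => f' (x + ℏ * α) :=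
    h.comp_tendsto (mp ℏ α).quasiMeasurePreserving.tendsto_ae
  filter_upwards [h2] with x hx
  simp [g, hx]

lemma g_comp (ℏ α β α' β' : ℝ) (f : ℝ → ℂ) :
    g ℏ α β (g ℏ α' β' f) = fun x =>
      Complex.exp (Complex.I * ℏ / 2 * (α * β' - α' * β)) * g ℏ (α + α') (β + β') f x := by
  funext x
  have harg : x + ℏ * α + ℏ * α' = x + ℏ * (α + α') := by ring
  simp only [g, harg]
  rw [show ∀ a b c d e : ℂ, a * b * (c * d * e) = (a * b * (c * d)) * e from fun _ _ _ _ _ => by ring,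
    show ∀ p q r e : ℂ, p * (q * r * e) = (p * (q * r)) * e from fun _ _ _ _ => by ring]
  congr 1
  rw [← Complex.exp_add, ← Complex.exp_add, ← Complex.exp_add, ← Complex.exp_add,
    ← Complex.exp_add]
  congr 1
  push_cast
  ring

noncomputable def Wfun (ℏ α β : ℝ) (Φ : Lp ℂ 2 (volume : Measure ℝ)) :
    Lp ℂ 2 (volume : Measure ℝ) :=
  (memℒp_g ℏ α β (Lp.memLp Φ)).toLp _

lemma coeFn_Wfun (ℏ α β : ℝ) (Φ : Lp ℂ 2 (volume : Measure ℝ)) :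
    ⇑(Wfun ℏ α β Φ) =ᵐ[volume] g ℏ α β Φ := MemLp.coeFn_toLp _

lemma Wfun_Wfun (ℏ α β α' β' : ℝ) (Φ : Lp ℂ 2 (volume : Measure ℝ)) :
    Wfun ℏ α β (Wfun ℏ α' β' Φ) =
      Complex.exp (Complex.I * ℏ / 2 * (α * β' - α' * β)) • Wfun ℏ (α + α') (β + β') Φ := by
  apply Lp.ext
  have h1 := coeFn_Wfun ℏ α β (Wfun ℏ α' β' Φ)
  have h2 := g_congr ℏ α β (coeFn_Wfun ℏ α' β' Φ)
  have h3 := Lp.coeFn_smul (Complex.exp (Complex.I * ℏ / 2 * (α * β' - α' * β)))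
    (Wfun ℏ (α + α') (β + β') Φ)
  have h4 := coeFn_Wfun ℏ (α + α') (β + β') Φ
  filter_upwards [h1, h2, h3, h4] with x hx1 hx2 hx3 hx4
  rw [hx1, hx2, g_comp, hx3, Pi.smul_apply, smul_eq_mul, hx4]

lemma Wfun_zero_zero (ℏ : ℝ) (Φ : Lp ℂ 2 (volume : Measure ℝ)) : Wfun ℏ 0 0 Φ = Φ := by
  apply Lp.ext
  filter_upwards [coeFn_Wfun ℏ 0 0 Φ] with x hx
  simp [g] at hx
  simpa using hx

lemma Wfun_add (ℏ α β : ℝ) (Φ Ψ : Lp ℂ 2 (volume : Measure ℝ)) :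
    Wfun ℏ α β (Φ + Ψ) = Wfun ℏ α β Φ + Wfun ℏ α β Ψ := by
  apply Lp.ext
  have h0 := g_congr ℏ α β (Lp.coeFn_add Φ Ψ)
  filter_upwards [coeFn_Wfun ℏ α β (Φ + Ψ), h0, Lp.coeFn_add (Wfun ℏ α β Φ) (Wfun ℏ α β Ψ),
    coeFn_Wfun ℏ α β Φ, coeFn_Wfun ℏ α β Ψ] with x h1 h2 h3 h4 h5
  rw [h1, h2, h3, Pi.add_apply, h4, h5]
  simp [g]
  ring

lemma Wfun_smul (ℏ α β : ℝ) (c : ℂ) (Φ : Lp ℂ 2 (volume : Measure ℝ)) :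
    Wfun ℏ α β (c • Φ) = c • Wfun ℏ α β Φ := by
  apply Lp.ext
  have h0 := g_congr ℏ α β (Lp.coeFn_smul c Φ)
  filter_upwards [coeFn_Wfun ℏ α β (c • Φ), h0, Lp.coeFn_smul c (Wfun ℏ α β Φ),
    coeFn_Wfun ℏ α β Φ] with x h1 h2 h3 h4
  rw [h1, h2, h3, Pi.smul_apply, h4]
  simp [g]
  ring

lemma norm_Wfun (ℏ α β : ℝ) (Φ : Lp ℂ 2 (volume : Measure ℝ)) : ‖Wfun ℏ α β Φ‖ = ‖Φ‖ := by
  rw [Wfun, Lp.norm_toLp, eLpNorm_g ℏ α β (Lp.aestronglyMeasurable Φ), Lp.norm_def]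

noncomputable def Wequiv (ℏ α β : ℝ) :
    Lp ℂ 2 (volume : Measure ℝ) ≃ₗᵢ[ℂ] Lp ℂ 2 (volume : Measure ℝ) where
  toFun := Wfun ℏ α β
  invFun := Wfun ℏ (-α) (-β)
  map_add' := Wfun_add ℏ α β
  map_smul' := Wfun_smul ℏ α β
  left_inv := fun Φ => by
    show Wfun ℏ (-α) (-β) (Wfun ℏ α β Φ) = Φ
    rw [Wfun_Wfun]
    simp [Wfun_zero_zero]
  right_inv := fun Φ => by
    show Wfun ℏ α β (Wfun ℏ (-α) (-β) Φ) = Φ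
    rw [Wfun_Wfun]
    simp [Wfun_zero_zero]
  norm_map' := norm_Wfun ℏ α β

end WeylAux


/-- **The Schrödinger representation of the Weyl relations.** Fix `ℏ > 0`.
The operators `(W(α,β)Φ)(x) = e^{iℏαβ/2} e^{iβx} Φ(x + ℏα)` on `L²(ℝ, ℂ)` are
unitary (linear isometric bijections), `W(0,0) = 1`, they satisfy the Weyl
relations `W(α,β)W(α′,β′) = e^{(iℏ/2)(αβ′ − α′β)} W(α+α′, β+β′)`, and the
adjoint (= inverse) satisfies `W(α,β)* = W(−α,−β)`. -/
theorem weyl_operators_schroedinger_representation (ℏ : ℝ) (hℏ : 0 < ℏ) :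
    ∃ W : ℝ → ℝ → (Lp ℂ 2 (volume : Measure ℝ) ≃ₗᵢ[ℂ] Lp ℂ 2 (volume : Measure ℝ)),
      (∀ (α β : ℝ) (Φ : Lp ℂ 2 (volume : Measure ℝ)),
        ⇑(W α β Φ) =ᵐ[volume] fun x : ℝ =>
          Complex.exp (Complex.I * ℏ * α * β / 2) * Complex.exp (Complex.I * β * x) *
            Φ (x + ℏ * α)) ∧
      W 0 0 = LinearIsometryEquiv.refl ℂ (Lp ℂ 2 (volume : Measure ℝ)) ∧
      (∀ (α β α' β' : ℝ) (Φ : Lp ℂ 2 (volume : Measure ℝ)),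
        W α β (W α' β' Φ) =
          Complex.exp (Complex.I * ℏ / 2 * (α * β' - α' * β)) •
            W (α + α') (β + β') Φ) ∧
      (∀ α β : ℝ, (W α β).symm = W (-α) (-β)) := by
  refine ⟨fun α β => WeylAux.Wequiv ℏ α β, fun α β Φ => WeylAux.coeFn_Wfun ℏ α β Φ, ?_, ?_, ?_⟩
  · exact LinearIsometryEquiv.ext fun Φ => WeylAux.Wfun_zero_zero ℏ Φ
  · exact fun α β α' β' Φ => WeylAux.Wfun_Wfun ℏ α β α' β' Φ
  · exact fun α β => LinearIsometryEquiv.ext fun Φ => rfl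
end

section
/- The scaling degree increases at most by the order of differentiation: for every tempered distribution t on ℝⁿ and every multi-index α ∈ ℕ₀ⁿ, one has sd(∂^α t) ≤ sd(t) + |α|; more generally, for any constant-coefficient partial differential operator p(∂) of degree |p|, sd(p(∂) t) ≤ sd(t) + |p|. -/
open Filter Topology

/-- Dilation of a Schwartz function: `(dilate n lam f) x = f (lam⁻¹ • x)` for
`lam ≠ 0` (and `f` itself for `lam = 0`), i.e. formally `x ↦ f (x / lam)`. -/
noncomputable def dilate (n : ℕ) (lam : ℝ) (f : SchwartzMap (Fin n → ℝ) ℂ) :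
    SchwartzMap (Fin n → ℝ) ℂ :=
  if h : lam = 0 then f
  else
    SchwartzMap.compCLMOfContinuousLinearEquiv ℝ
      ((LinearEquiv.smulOfNeZero ℝ (Fin n → ℝ) lam⁻¹
        (inv_ne_zero h)).toContinuousLinearEquiv) f

/-- The set of candidate scaling degrees `δ` of a (not necessarily continuous)
functional `T` on Schwartz space: those `δ` with `λ^δ · T_λ → 0` weakly as
`λ → 0⁺`, where `⟨T_λ, f⟩ = λ^{-n} ⟨T, f(·/λ)⟩`.  The scaling degree `sd(T)`
is the infimum of this set; `sd(T) ≤ d` iff every `δ > d` lies in it. -/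
noncomputable def sdSetF (n : ℕ) (T : SchwartzMap (Fin n → ℝ) ℂ → ℂ) :
    Set ℝ :=
  {δ : ℝ | ∀ f : SchwartzMap (Fin n → ℝ) ℂ,
    Tendsto (fun lam : ℝ =>
        ((lam ^ δ * lam ^ (-(n : ℝ)) : ℝ) : ℂ) * T (dilate n lam f))
      (nhdsWithin 0 (Set.Ioi 0)) (nhds 0)}

/-- The multi-index derivative `∂^α` on Schwartz space: for each `j`,
differentiate `α j` times in the `j`-th coordinate direction. -/
noncomputable def schwartzMDeriv {n : ℕ} (α : Fin n → ℕ)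
    (f : SchwartzMap (Fin n → ℝ) ℂ) : SchwartzMap (Fin n → ℝ) ℂ :=
  (List.finRange n).foldr
    (fun j g => (fun h => SchwartzMap.evalCLM ℝ (Fin n → ℝ) ℂ (Pi.single j 1) (SchwartzMap.fderivCLM ℝ (Fin n → ℝ) ℂ h))^[α j] g) f

/-- The finite set of multi-indices `α` with `|α| = Σⱼ αⱼ ≤ m`. -/
noncomputable def multiIndices (n m : ℕ) : Finset (Fin n → ℕ) :=
  (Fintype.piFinset fun _ : Fin n => Finset.range (m + 1)).filter
    fun α => (∑ j, α j) ≤ m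

lemma dilate_apply {n : ℕ} {lam : ℝ} (h : lam ≠ 0) (f : SchwartzMap (Fin n → ℝ) ℂ)
    (x : Fin n → ℝ) : dilate n lam f x = f (lam⁻¹ • x) := by
  simp [dilate, h]

lemma dilate_smul {n : ℕ} {lam : ℝ} (h : lam ≠ 0) (r : ℝ) (f : SchwartzMap (Fin n → ℝ) ℂ) :
    dilate n lam (r • f) = r • dilate n lam f := by
  ext x; simp [dilate_apply h]

lemma pderiv_dilate {n : ℕ} {lam : ℝ} (h : lam ≠ 0) (v : Fin n → ℝ)
    (f : SchwartzMap (Fin n → ℝ) ℂ) :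
    SchwartzMap.evalCLM ℝ (Fin n → ℝ) ℂ v (SchwartzMap.fderivCLM ℝ (Fin n → ℝ) ℂ (dilate n lam f)) =
      lam⁻¹ • dilate n lam (SchwartzMap.evalCLM ℝ (Fin n → ℝ) ℂ v (SchwartzMap.fderivCLM ℝ (Fin n → ℝ) ℂ f)) := by
  ext x
  have hdil : (dilate n lam f : (Fin n → ℝ) → ℂ) = fun y => f (lam⁻¹ • y) := by
    funext y; exact dilate_apply h f y
  have hd : fderiv ℝ (fun y : Fin n → ℝ => f (lam⁻¹ • y)) x =
      (fderiv ℝ f (lam⁻¹ • x)).comp (lam⁻¹ • ContinuousLinearMap.id ℝ (Fin n → ℝ)) := by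
    rw [show (fun y : Fin n → ℝ => f (lam⁻¹ • y)) =
        (f : (Fin n → ℝ) → ℂ) ∘ (lam⁻¹ • ContinuousLinearMap.id ℝ (Fin n → ℝ)) from rfl,
      fderiv_comp x (f.differentiable.differentiableAt) (by fun_prop),
      ContinuousLinearMap.fderiv]
    rfl
  simp only [SchwartzMap.evalCLM_apply_apply, SchwartzMap.fderivCLM_apply, SchwartzMap.smul_apply, hdil, hd,
    dilate_apply h, ContinuousLinearMap.coe_comp', Function.comp_apply,
    ContinuousLinearMap.smul_apply, ContinuousLinearMap.coe_id', id_eq, map_smul]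

lemma iter_pderiv_smul {n : ℕ} (v : Fin n → ℝ) (k : ℕ) (r : ℝ)
    (f : SchwartzMap (Fin n → ℝ) ℂ) :
    (fun g => SchwartzMap.evalCLM ℝ (Fin n → ℝ) ℂ v (SchwartzMap.fderivCLM ℝ (Fin n → ℝ) ℂ g))^[k] (r • f) =
      r • (fun g => SchwartzMap.evalCLM ℝ (Fin n → ℝ) ℂ v (SchwartzMap.fderivCLM ℝ (Fin n → ℝ) ℂ g))^[k] f := by
  induction k generalizing f with
  | zero => simp
  | succ k ih => rw [Function.iterate_succ_apply, Function.iterate_succ_apply, map_smul, map_smul, ih]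

lemma iter_pderiv_dilate {n : ℕ} {lam : ℝ} (h : lam ≠ 0) (v : Fin n → ℝ) (k : ℕ)
    (f : SchwartzMap (Fin n → ℝ) ℂ) :
    (fun g => SchwartzMap.evalCLM ℝ (Fin n → ℝ) ℂ v (SchwartzMap.fderivCLM ℝ (Fin n → ℝ) ℂ g))^[k] (dilate n lam f) =
      (lam⁻¹) ^ k • dilate n lam ((fun g => SchwartzMap.evalCLM ℝ (Fin n → ℝ) ℂ v (SchwartzMap.fderivCLM ℝ (Fin n → ℝ) ℂ g))^[k] f) := by
  induction k generalizing f with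
  | zero => simp
  | succ k ih =>
    rw [Function.iterate_succ_apply, Function.iterate_succ_apply,
      pderiv_dilate h, iter_pderiv_smul, ih, smul_smul, pow_succ, mul_comm]

lemma mderiv_dilate {n : ℕ} {lam : ℝ} (h : lam ≠ 0) (α : Fin n → ℕ)
    (f : SchwartzMap (Fin n → ℝ) ℂ) :
    schwartzMDeriv α (dilate n lam f) =
      (lam⁻¹) ^ (∑ j, α j) • dilate n lam (schwartzMDeriv α f) := by
  unfold schwartzMDeriv
  rw [Fin.sum_univ_def]
  induction (List.finRange n) with
  | nil => simp
  | cons j l ih =>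
    simp only [List.foldr_cons, List.map_cons, List.sum_cons, ih, pow_add]
    clear ih
    induction (α j) with
    | zero => simp
    | succ k ihk =>
      rw [Function.iterate_succ_apply', Function.iterate_succ_apply', ihk,
        map_smul, map_smul, pderiv_dilate h]
      rw [smul_smul]
      congr 1
      ring

lemma sd_deriv (n : ℕ) (t : SchwartzMap (Fin n → ℝ) ℂ →L[ℂ] ℂ)
    (α : Fin n → ℕ) (d : ℝ)
    (hsd : ∀ δ : ℝ, d < δ → δ ∈ sdSetF n fun f => t f)
    (δ : ℝ) (hδ : d + (∑ j, α j : ℕ) < δ) :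
    δ ∈ sdSetF n fun f => (-1 : ℂ) ^ (∑ j, α j) * t (schwartzMDeriv α f) := by
  intro f
  set k : ℕ := ∑ j, α j with hk
  have h' := hsd (δ - k) (by linarith) (schwartzMDeriv α f)
  have h'' := h'.const_mul ((-1 : ℂ) ^ k)
  rw [mul_zero] at h''
  refine h''.congr' ?_
  filter_upwards [self_mem_nhdsWithin] with lam (hlam : (0:ℝ) < lam)
  have hne : lam ≠ 0 := ne_of_gt hlam
  have harg : t (schwartzMDeriv α (dilate n lam f)) =
      (((lam⁻¹ ^ k : ℝ) : ℂ)) * t (dilate n lam (schwartzMDeriv α f)) := by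
    rw [mderiv_dilate hne, ContinuousLinearMap.map_smul_of_tower, Complex.real_smul]
  have hre : (lam ^ (δ - (k:ℝ)) * lam ^ (-(n : ℝ)) : ℝ)
      = (lam ^ δ * lam ^ (-(n : ℝ)) : ℝ) * (lam⁻¹ ^ k : ℝ) := by
    have h1 : lam⁻¹ ^ k = (lam ^ ((k : ℕ) : ℝ))⁻¹ := by
      rw [Real.rpow_natCast, inv_pow]
    rw [Real.rpow_sub hlam, div_eq_mul_inv, h1]
    ring
  rw [harg, hre]
  push_cast
  ring

/-- **The scaling degree increases at most by the order of differentiation.**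
For a tempered distribution `t` on `ℝⁿ` and a multi-index `α`, one has
`sd(∂^α t) ≤ sd(t) + |α|` (phrased via upper bounds for the scaling degree:
any upper bound `d` for `sd(t)` yields the upper bound `d + |α|` for
`sd(∂^α t)`, where `⟨∂^α t, f⟩ = (−1)^{|α|}⟨t, ∂^α f⟩`); more generally, for
any constant-coefficient partial differential operator `p(∂)` of degree `≤ m`,
`sd(p(∂)t) ≤ sd(t) + m`. -/
theorem scaling_degree_of_derivative (n : ℕ)
    (t : SchwartzMap (Fin n → ℝ) ℂ →L[ℂ] ℂ) :
    (∀ (α : Fin n → ℕ) (d : ℝ),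
      (∀ δ : ℝ, d < δ → δ ∈ sdSetF n fun f => t f) →
      (∀ δ : ℝ, d + (∑ j, α j : ℕ) < δ →
        δ ∈ sdSetF n fun f =>
          (-1 : ℂ) ^ (∑ j, α j) * t (schwartzMDeriv α f))) ∧
    (∀ (m : ℕ) (c : (Fin n → ℕ) → ℂ) (d : ℝ),
      (∀ δ : ℝ, d < δ → δ ∈ sdSetF n fun f => t f) →
      (∀ δ : ℝ, d + m < δ →
        δ ∈ sdSetF n fun f => ∑ α ∈ multiIndices n m,
          c α * ((-1 : ℂ) ^ (∑ j, α j) * t (schwartzMDeriv α f)))) := by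
  constructor
  · exact fun α d hsd δ hδ => sd_deriv n t α d hsd δ hδ
  · intro m c d hsd δ hδ f
    have : (fun lam : ℝ =>
        ((lam ^ δ * lam ^ (-(n : ℝ)) : ℝ) : ℂ) * ∑ α ∈ multiIndices n m,
          c α * ((-1 : ℂ) ^ (∑ j, α j) * t (schwartzMDeriv α (dilate n lam f))))
        = fun lam : ℝ => ∑ α ∈ multiIndices n m,
          c α * (((lam ^ δ * lam ^ (-(n : ℝ)) : ℝ) : ℂ) *
            ((-1 : ℂ) ^ (∑ j, α j) * t (schwartzMDeriv α (dilate n lam f)))) := by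
      funext lam
      rw [Finset.mul_sum]
      exact Finset.sum_congr rfl fun α _ => by ring
    rw [this]
    have h0 : (0 : ℂ) = ∑ α ∈ multiIndices n m, (0 : ℂ) := by simp
    rw [h0]
    refine tendsto_finset_sum _ fun α hα => ?_
    have hαm : (∑ j, α j) ≤ m := (Finset.mem_filter.mp hα).2
    have := (sd_deriv n t α d hsd δ (by
      have : ((∑ j, α j : ℕ) : ℝ) ≤ (m : ℝ) := by exact_mod_cast hαm
      linarith)) f
    simpa using this.const_mul (c α)
end
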